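/- For n ≥ 2 agents, p ≥ 2 items, Borda utilities, uniform independent profiles, and any policy π of length p with π_1 = 1: the expected utility of agent 1 satisfies ū_1(π) = p + ū_1(π̃), and for every agent i ≠ 1 the expected utility satisfies ū_i(π) = ((p+1)/p)·ū_i(π̃), where π̃ is the policy of length p−1 obtained from π by deleting its first entry (and ū_i(π̃) is computed in the allocation of p−1 items). -/

import Mathlib

open Finset

namespace SeqAlloc

/-- Given an agent's ranking `r` (a bijection sending each item to its position,
position `0` being the most preferred), pick the most preferred item of a
nonempty set `S` of remaining items. -/
def pickItem {p : ℕ} (r : Equiv.Perm (Fin p)) (S : Finset (Fin p)) (h : S.Nonempty) : Fin p :=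
  r.symm ((S.image r).min' (h.image r))

/-- Sequential allocation: the agents in the list take turns; each takes her
most preferred remaining item.  Returns the list of (agent, item) pairs. -/
def allocList {n p : ℕ} (R : Fin n → Equiv.Perm (Fin p)) :
    List (Fin n) → Finset (Fin p) → List (Fin n × Fin p)
  | [], _ => []
  | a :: rest, S =>
    if h : S.Nonempty then
      (a, pickItem (R a) S h) :: allocList R rest (S.erase (pickItem (R a) S h))
    else []

/-- The utility that agent `i` obtains when the items `Fin p` are allocated
sequentially according to the policy `π` under profile `R`, where an item
ranked in (1-indexed) position `k` by an agent is worth `g k` to her. -/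
noncomputable def utilAgent {n p : ℕ} (g : ℕ → ℝ) (R : Fin n → Equiv.Perm (Fin p))
    (π : List (Fin n)) (i : Fin n) : ℝ :=
  ((allocList R π Finset.univ).map
    (fun x => if x.1 = i then g (((R i) x.2).val + 1) else 0)).sum

/-- The expected utility of agent `i` under policy `π` for `p` items and scoring
function `g`, the profiles being drawn uniformly and independently. -/
noncomputable def expectedUtil (n p : ℕ) (g : ℕ → ℝ) (π : List (Fin n)) (i : Fin n) : ℝ :=
  (∑ R : Fin n → Equiv.Perm (Fin p), utilAgent g R π i) / ((p.factorial : ℝ) ^ n)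

/-- Expected Borda utility: an item ranked (1-indexed) in position `k` is worth
`p - k + 1`. -/
noncomputable def expectedBordaUtil (n p : ℕ) (π : List (Fin n)) (i : Fin n) : ℝ :=
  expectedUtil n p (fun k => (p : ℝ) - k + 1) π i

/-- The strictly alternating policy `1212…` of length `p` for two agents. -/
def altPolicy (p : ℕ) : List (Fin 2) :=
  (List.range p).map (fun k => if k % 2 = 0 then 0 else 1)

end SeqAlloc

section Helpers

open SeqAlloc Equiv

variable {n m q : ℕ}

/-- Delete item `x` from a ranking of `m+1` items, obtaining a ranking of the
remaining `m` items (indexed via `x.succAbove`). -/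
def delPerm (x : Fin (m + 1)) (r : Equiv.Perm (Fin (m + 1))) : Equiv.Perm (Fin m) :=
  Equiv.removeNone ((finSuccEquiv' x).symm.trans (r.trans (finSuccEquiv' (r x))))

theorem delPerm_eq (x : Fin (m + 1)) (r : Equiv.Perm (Fin (m + 1))) (k : Fin m) :
    (r x).succAbove (delPerm x r k) = r (x.succAbove k) := by
  have hne : r (x.succAbove k) ≠ r x := r.injective.ne (Fin.succAbove_ne x k)
  obtain ⟨c, hc⟩ := Fin.exists_succAbove_eq hne
  have he : ((finSuccEquiv' x).symm.trans (r.trans (finSuccEquiv' (r x)))) (some k) = some c := by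
    simp only [Equiv.trans_apply, finSuccEquiv'_symm_some, ← hc, finSuccEquiv'_succAbove]
  have h2 := Equiv.removeNone_some _ ⟨c, he⟩
  rw [he] at h2
  have h3 : delPerm x r k = c := Option.some_injective _ h2
  rw [h3, hc]

theorem delPerm_lt_iff (x : Fin (m + 1)) (r : Equiv.Perm (Fin (m + 1))) (a b : Fin m) :
    delPerm x r a < delPerm x r b ↔ r (x.succAbove a) < r (x.succAbove b) := by
  rw [← delPerm_eq x r a, ← delPerm_eq x r b, Fin.succAbove_lt_succAbove_iff]

/-- Reconstruct a ranking of `m+1` items from: the item `x` to re-insert, its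
position `j`, and the ranking `ρ` of the other `m` items. -/
def recon (x j : Fin (m + 1)) (ρ : Equiv.Perm (Fin m)) : Equiv.Perm (Fin (m + 1)) :=
  (finSuccEquiv' x).trans ((Equiv.optionCongr ρ).trans (finSuccEquiv' j).symm)

@[simp] theorem recon_self (x j : Fin (m + 1)) (ρ : Equiv.Perm (Fin m)) :
    recon x j ρ x = j := by
  simp [recon, finSuccEquiv'_at, finSuccEquiv'_symm_none]

@[simp] theorem recon_succAbove (x j : Fin (m + 1)) (ρ : Equiv.Perm (Fin m)) (k : Fin m) :
    recon x j ρ (x.succAbove k) = j.succAbove (ρ k) := by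
  simp [recon, finSuccEquiv'_succAbove, finSuccEquiv'_symm_some]

@[simp] theorem delPerm_recon (x j : Fin (m + 1)) (ρ : Equiv.Perm (Fin m)) :
    delPerm x (recon x j ρ) = ρ := by
  refine Equiv.ext fun k => ?_
  have h := delPerm_eq x (recon x j ρ) k
  rw [recon_succAbove, recon_self] at h
  exact Fin.succAbove_right_injective h

theorem recon_delPerm (x : Fin (m + 1)) (r : Equiv.Perm (Fin (m + 1))) :
    recon x (r x) (delPerm x r) = r := by
  ext y
  rcases eq_or_ne y x with rfl | hne
  · simp
  · obtain ⟨k, rfl⟩ := Fin.exists_succAbove_eq hne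
    rw [recon_succAbove, delPerm_eq]

/-- The master bijection between profiles on `m+1` items and triples
(first pick of agent `a0`, positions of that item for the other agents,
reduced profile on `m` items). -/
def profileEquiv (a0 : Fin n) :
    (Fin n → Equiv.Perm (Fin (m + 1))) ≃
      Fin (m + 1) × ({ k : Fin n // k ≠ a0 } → Fin (m + 1)) × (Fin n → Equiv.Perm (Fin m)) where
  toFun R := ((R a0).symm 0, fun k => R k.1 ((R a0).symm 0), fun k => delPerm ((R a0).symm 0) (R k))
  invFun q := fun k => recon q.1 (if h : k = a0 then 0 else q.2.1 ⟨k, h⟩) (q.2.2 k)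
  left_inv R := by
    funext k
    by_cases h : k = a0
    · subst h
      simp only [dif_pos rfl]
      have h2 := recon_delPerm ((R k).symm 0) (R k)
      rwa [Equiv.apply_symm_apply] at h2
    · simp only [dif_neg h]
      exact recon_delPerm _ _
  right_inv := by
    rintro ⟨x, J, P⟩
    have hsymm : (Equiv.symm (recon x (if h : a0 = a0 then 0 else J ⟨a0, h⟩) (P a0))) 0 = x := by
      rw [dif_pos rfl, Equiv.symm_apply_eq, recon_self]
    refine Prod.ext hsymm (Prod.ext ?_ ?_)
    · funext k
      show recon x (if h : (k : Fin n) = a0 then 0 else J ⟨k, h⟩) (P k) _ = J k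
      rw [hsymm, dif_neg k.2, recon_self]
    · funext k
      show delPerm _ (recon x (if h : k = a0 then 0 else J ⟨k, h⟩) (P k)) = P k
      rw [hsymm, delPerm_recon]

theorem pickItem_eq {p : ℕ} (r : Equiv.Perm (Fin p)) (S : Finset (Fin p)) (h : S.Nonempty)
    (w : Fin p) (hw : w ∈ S) (hmin : ∀ z ∈ S, r w ≤ r z) :
    pickItem r S h = w := by
  unfold pickItem
  rw [Equiv.symm_apply_eq]
  refine le_antisymm (Finset.min'_le _ _ (Finset.mem_image_of_mem _ hw)) (Finset.le_min' _ _ _ ?_)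
  rintro b hb
  obtain ⟨z, hz, rfl⟩ := Finset.mem_image.mp hb
  exact hmin z hz

theorem pickItem_mem {p : ℕ} (r : Equiv.Perm (Fin p)) (S : Finset (Fin p)) (h : S.Nonempty) :
    pickItem r S h ∈ S := by
  obtain ⟨z, hz, hz2⟩ := Finset.mem_image.mp (Finset.min'_mem (S.image r) (h.image r))
  have : pickItem r S h = z := by
    unfold pickItem; rw [← hz2]; exact r.symm_apply_apply z
  rwa [this]

theorem pickItem_le {p : ℕ} (r : Equiv.Perm (Fin p)) (S : Finset (Fin p)) (h : S.Nonempty)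
    {z : Fin p} (hz : z ∈ S) : r (pickItem r S h) ≤ r z := by
  unfold pickItem
  rw [Equiv.apply_symm_apply]
  exact Finset.min'_le _ _ (Finset.mem_image_of_mem _ hz)

theorem pickItem_image {p : ℕ} (f : Fin m → Fin p) (hf : Function.Injective f)
    (r : Equiv.Perm (Fin p)) (r' : Equiv.Perm (Fin m))
    (hc : ∀ a b, r' a < r' b ↔ r (f a) < r (f b))
    (T : Finset (Fin m)) (hT : T.Nonempty) (hT' : (T.image f).Nonempty) :
    pickItem r (T.image f) hT' = f (pickItem r' T hT) := by
  set y := pickItem r' T hT with hy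
  refine pickItem_eq r _ hT' (f y) (Finset.mem_image_of_mem f (pickItem_mem r' T hT)) ?_
  rintro z hz
  obtain ⟨z, hzT, rfl⟩ := Finset.mem_image.mp hz
  refine le_of_not_gt fun hlt => ?_
  have h1 : r' z < r' y := (hc z y).mpr hlt
  exact absurd (pickItem_le r' T hT hzT) (not_le.mpr h1)

theorem allocList_image {p : ℕ} (f : Fin m → Fin p) (hf : Function.Injective f)
    (R : Fin n → Equiv.Perm (Fin p)) (R' : Fin n → Equiv.Perm (Fin m))
    (hcomp : ∀ k a b, R' k a < R' k b ↔ R k (f a) < R k (f b)) :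
    ∀ (t : List (Fin n)) (T : Finset (Fin m)),
      allocList R t (T.image f) = (allocList R' t T).map (Prod.map id f)
  | [], T => rfl
  | a :: t, T => by
    by_cases hT : T.Nonempty
    · have hT' : (T.image f).Nonempty := hT.image f
      rw [allocList, allocList, dif_pos hT, dif_pos hT',
        pickItem_image f hf (R a) (R' a) (hcomp a) T hT hT',
        ← Finset.image_erase hf,
        allocList_image f hf R R' hcomp t (T.erase (pickItem (R' a) T hT))]
      rfl
    · have hT'' : ¬(T.image f).Nonempty := by
        rw [Finset.image_nonempty]; exact hT
      rw [allocList, allocList, dif_neg hT, dif_neg hT'']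
      rfl

theorem image_succAbove_univ (x : Fin (m + 1)) :
    (Finset.univ : Finset (Fin m)).image x.succAbove
      = (Finset.univ : Finset (Fin (m + 1))).erase x := by
  ext y
  simp only [Finset.mem_image, Finset.mem_erase, Finset.mem_univ, and_true, true_and]
  constructor
  · rintro ⟨k, rfl⟩; exact Fin.succAbove_ne x k
  · intro h; exact Fin.exists_succAbove_eq h

/-- Decomposition of the utility under a policy starting with agent `a0`. -/
theorem util_decomp (g : ℕ → ℝ) (R : Fin n → Equiv.Perm (Fin (m + 1)))
    (a0 : Fin n) (t : List (Fin n)) (i : Fin n) :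
    utilAgent g R (a0 :: t) i =
      (if a0 = i then g (((R i) ((R a0).symm 0)).val + 1) else 0) +
      ((allocList (fun k => delPerm ((R a0).symm 0) (R k)) t (Finset.univ : Finset (Fin m))).map
        (fun z => if z.1 = i then
          g (((R i) (((R a0).symm 0).succAbove z.2)).val + 1) else 0)).sum := by
  set x := (R a0).symm 0 with hx
  have huniv : (Finset.univ : Finset (Fin (m + 1))).Nonempty := Finset.univ_nonempty
  have hpick : pickItem (R a0) Finset.univ huniv = x := by
    refine pickItem_eq _ _ _ x (Finset.mem_univ x) fun z _ => ?_
    rw [hx, Equiv.apply_symm_apply]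
    exact Fin.zero_le _
  have hcomp : ∀ (k : Fin n) (a b : Fin m),
      delPerm x (R k) a < delPerm x (R k) b ↔ R k (x.succAbove a) < R k (x.succAbove b) :=
    fun k => delPerm_lt_iff x (R k)
  unfold utilAgent
  rw [allocList, dif_pos huniv, hpick, ← image_succAbove_univ x,
    allocList_image x.succAbove Fin.succAbove_right_injective R
      (fun k => delPerm x (R k)) hcomp t Finset.univ,
    List.map_cons, List.sum_cons, List.map_map]
  rfl

theorem list_sum_swap {α β : Type*} (s : Finset β) (l : List α) (f : β → α → ℝ) :
    ∑ j ∈ s, (l.map (f j)).sum = (l.map (fun z => ∑ j ∈ s, f j z)).sum := by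
  induction l with
  | nil => simp
  | cons a l ih => simp [Finset.sum_add_distrib, ih]

theorem sum_eval {ι β : Type*} [Fintype ι] [DecidableEq ι] [Fintype β] (a : ι) (h : β → ℝ) :
    ∑ J : ι → β, h (J a)
      = (Fintype.card ({ j : ι // j ≠ a } → β) : ℝ) * ∑ b, h b := by
  rw [← Equiv.sum_comp (Equiv.funSplitAt a β).symm (fun J => h (J a))]
  have hev : ∀ q : β × ({ j : ι // j ≠ a } → β), ((Equiv.funSplitAt a β).symm q) a = q.1 := by
    rintro ⟨b, f⟩
    simp [Equiv.funSplitAt, Equiv.piSplitAt]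
  simp_rw [hev]
  rw [Fintype.sum_prod_type]
  simp only [Finset.sum_const, Finset.card_univ, nsmul_eq_mul, Fintype.card_fun]
  rw [Finset.mul_sum]

theorem sum_succAbove_val (v : Fin m) :
    ∑ j : Fin (m + 1), (((j.succAbove v : Fin (m + 1)) : ℕ) : ℝ)
      = (m + 1) * v + (v + 1) := by
  have hterm : ∀ j : Fin (m + 1), (((j.succAbove v : Fin (m + 1)) : ℕ) : ℝ)
      = (v : ℝ) + (if (v : ℕ) < (j : ℕ) then 0 else 1) := by
    intro j
    by_cases h : (v : ℕ) < (j : ℕ)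
    · rw [Fin.succAbove_of_castSucc_lt _ _ (by simpa [Fin.lt_def] using h), if_pos h]
      simp
    · rw [Fin.succAbove_of_le_castSucc _ _ (by simpa [Fin.le_def] using not_lt.mp h), if_neg h]
      push_cast [Fin.val_succ]
      ring
  simp_rw [hterm]
  rw [Finset.sum_add_distrib, Finset.sum_const, Finset.card_univ, Fintype.card_fin]
  have hcount : ∑ j : Fin (m + 1), (if (v : ℕ) < (j : ℕ) then (0 : ℝ) else 1)
      = (v : ℝ) + 1 := by
    rw [Fin.sum_univ_eq_sum_range (fun k => if (v : ℕ) < k then (0 : ℝ) else 1)]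
    rw [Finset.sum_ite, Finset.sum_const, Finset.sum_const]
    have hfilter : (Finset.range (m + 1)).filter (fun k => ¬(v : ℕ) < k)
        = Finset.range ((v : ℕ) + 1) := by
      ext k
      simp only [Finset.mem_filter, Finset.mem_range, not_lt]
      have := v.isLt
      omega
    rw [hfilter]
    simp
  rw [hcount]
  push_cast
  ring

theorem key_sum (v : Fin m) :
    ∑ j : Fin (m + 1),
        ((((m : ℕ) + 1 : ℕ) : ℝ) - ((((j.succAbove v : Fin (m + 1)) : ℕ) + 1 : ℕ) : ℝ) + 1)
      = (((m : ℕ) + 1 : ℝ) + 1) * (((m : ℕ) : ℝ) - (((v : ℕ) + 1 : ℕ) : ℝ) + 1) := by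
  have h1 : ∀ j : Fin (m + 1),
      ((((m : ℕ) + 1 : ℕ) : ℝ) - ((((j.succAbove v : Fin (m + 1)) : ℕ) + 1 : ℕ) : ℝ) + 1)
        = ((m : ℝ) + 1) - (((j.succAbove v : Fin (m + 1)) : ℕ) : ℝ) := by
    intro j; push_cast; ring
  simp_rw [h1]
  rw [Finset.sum_sub_distrib, Finset.sum_const, Finset.card_univ, Fintype.card_fin,
    sum_succAbove_val v]
  push_cast
  ring

end Helpers

section Main

open SeqAlloc Equiv

@[simp] theorem profileEquiv_symm_apply {n m : ℕ} (a0 : Fin n) (x : Fin (m + 1))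
    (J : { k : Fin n // k ≠ a0 } → Fin (m + 1)) (P : Fin n → Equiv.Perm (Fin m)) (k : Fin n) :
    (profileEquiv a0).symm (x, J, P) k
      = recon x (if h : k = a0 then 0 else J ⟨k, h⟩) (P k) := rfl

theorem sum_util {n m : ℕ} (a0 : Fin n) (t : List (Fin n)) (i : Fin n) (g : ℕ → ℝ) :
    ∑ R : Fin n → Equiv.Perm (Fin (m + 1)), utilAgent g R (a0 :: t) i
      = ∑ x : Fin (m + 1), ∑ J : { k : Fin n // k ≠ a0 } → Fin (m + 1),
          ∑ P : Fin n → Equiv.Perm (Fin m),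
          ((if a0 = i then
              g (((if h : i = a0 then (0 : Fin (m + 1)) else J ⟨i, h⟩) : Fin (m + 1)).val + 1)
            else 0) +
            ((allocList P t (Finset.univ : Finset (Fin m))).map
              (fun z => if z.1 = i then
                g (((if h : i = a0 then (0 : Fin (m + 1)) else J ⟨i, h⟩).succAbove
                    (P i z.2)).val + 1)
              else 0)).sum) := by
  rw [← Equiv.sum_comp (profileEquiv a0).symm
      (fun R => utilAgent g R (a0 :: t) i), Fintype.sum_prod_type]
  refine Finset.sum_congr rfl fun x _ => ?_
  rw [Fintype.sum_prod_type]
  refine Finset.sum_congr rfl fun J _ => Finset.sum_congr rfl fun P _ => ?_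
  have hA : (((profileEquiv a0).symm (x, J, P)) a0).symm 0 = x := by
    show (recon x (if h : a0 = a0 then 0 else J ⟨a0, h⟩) (P a0)).symm 0 = x
    rw [dif_pos rfl, Equiv.symm_apply_eq, recon_self]
  rw [util_decomp g ((profileEquiv a0).symm (x, J, P)) a0 t i, hA]
  have hP : (fun k => delPerm x (((profileEquiv a0).symm (x, J, P)) k)) = P := by
    funext k
    rw [profileEquiv_symm_apply, delPerm_recon]
  rw [hP]
  simp only [profileEquiv_symm_apply, recon_self, recon_succAbove]

theorem card_ne {α : Type*} [Fintype α] [DecidableEq α] (a : α) :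
    Fintype.card { x : α // x ≠ a } = Fintype.card α - 1 := by
  rw [Fintype.card_subtype_compl, Fintype.card_subtype_eq]

theorem card_profile {n m : ℕ} (a0 : Fin n) :
    (m + 1).factorial ^ n
      = (m + 1) * (m + 1) ^ Fintype.card { k : Fin n // k ≠ a0 } * m.factorial ^ n := by
  have h := Fintype.card_congr (profileEquiv (m := m) a0)
  simpa [Fintype.card_fun, Fintype.card_perm, Fintype.card_fin, Fintype.card_prod,
    mul_assoc] using h

theorem shift_map_sum {n m : ℕ} (P : Fin n → Equiv.Perm (Fin m)) (t : List (Fin n)) (i : Fin n) :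
    ((allocList P t (Finset.univ : Finset (Fin m))).map
      (fun z => if z.1 = i then
        ((m + 1 : ℕ) : ℝ) - ((((0 : Fin (m + 1)).succAbove (P i z.2)).val + 1 : ℕ) : ℝ) + 1
      else 0)).sum
    = utilAgent (fun k => ((m : ℕ) : ℝ) - (k : ℝ) + 1) P t i := by
  refine congrArg List.sum (List.map_congr_left fun z _ => ?_)
  by_cases hz : z.1 = i
  · rw [if_pos hz, if_pos hz, Fin.zero_succAbove, Fin.val_succ]
    push_cast
    ring
  · rw [if_neg hz, if_neg hz]

theorem part1 {n m : ℕ} (a0 : Fin n) (t : List (Fin n)) :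
    expectedBordaUtil n (m + 1) (a0 :: t) a0
      = ((m : ℝ) + 1) + expectedBordaUtil n m t a0 := by
  simp only [expectedBordaUtil, expectedUtil]
  rw [sum_util a0 t a0]
  have e0 : ∀ J : { k : Fin n // k ≠ a0 } → Fin (m + 1),
      (if h : a0 = a0 then (0 : Fin (m + 1)) else J ⟨a0, h⟩) = 0 := fun J => dif_pos rfl
  simp only [e0, eq_self_iff_true, dite_true, if_true, Fin.val_zero, zero_add, Nat.cast_one,
    shift_map_sum]
  simp only [Finset.sum_add_distrib, Finset.sum_const, Finset.card_univ, nsmul_eq_mul,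
    Fintype.card_fun, Fintype.card_perm, Fintype.card_fin]
  have hcardR : (((m + 1).factorial : ℝ)) ^ n
      = ((m : ℝ) + 1) * ((m : ℝ) + 1) ^ Fintype.card { k : Fin n // k ≠ a0 }
        * ((m.factorial : ℝ)) ^ n := by
    have := card_profile (m := m) (n := n) a0
    exact_mod_cast congrArg (Nat.cast : ℕ → ℝ) this
  rw [hcardR]
  have hm0 : ((m.factorial : ℝ)) ^ n ≠ 0 := by positivity
  have hm1 : ((m : ℝ) + 1) ≠ 0 := by positivity
  have hm2 : ((m : ℝ) + 1) ^ Fintype.card { k : Fin n // k ≠ a0 } ≠ 0 := by positivity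
  field_simp
  push_cast
  ring

theorem part2 {n m : ℕ} (a0 : Fin n) (t : List (Fin n)) (i : Fin n) (hi : i ≠ a0) :
    expectedBordaUtil n (m + 1) (a0 :: t) i
      = (((m : ℝ) + 1) + 1) / ((m : ℝ) + 1) * expectedBordaUtil n m t i := by
  simp only [expectedBordaUtil, expectedUtil]
  rw [sum_util a0 t i]
  have e0 : ∀ J : { k : Fin n // k ≠ a0 } → Fin (m + 1),
      (if h : i = a0 then (0 : Fin (m + 1)) else J ⟨i, h⟩) = J ⟨i, hi⟩ := fun J => dif_neg hi
  simp only [e0, if_neg (Ne.symm hi), zero_add]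
  rw [Finset.sum_const, Finset.sum_comm]
  have heval : ∀ P : Fin n → Equiv.Perm (Fin m),
      (∑ J : { k : Fin n // k ≠ a0 } → Fin (m + 1),
        ((allocList P t (Finset.univ : Finset (Fin m))).map
          (fun z => if z.1 = i then
            ((m + 1 : ℕ) : ℝ) - ((((J ⟨i, hi⟩).succAbove (P i z.2)).val + 1 : ℕ) : ℝ) + 1
          else 0)).sum)
      = (Fintype.card ({ j : { k : Fin n // k ≠ a0 } // j ≠ ⟨i, hi⟩ } → Fin (m + 1)) : ℝ)
          * ∑ j : Fin (m + 1),
            ((allocList P t (Finset.univ : Finset (Fin m))).map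
              (fun z => if z.1 = i then
                ((m + 1 : ℕ) : ℝ) - (((j.succAbove (P i z.2)).val + 1 : ℕ) : ℝ) + 1
              else 0)).sum := by
    intro P
    exact sum_eval (⟨i, hi⟩ : { k : Fin n // k ≠ a0 })
      (fun j : Fin (m + 1) => ((allocList P t (Finset.univ : Finset (Fin m))).map
        (fun z => if z.1 = i then
          ((m + 1 : ℕ) : ℝ) - (((j.succAbove (P i z.2)).val + 1 : ℕ) : ℝ) + 1
        else 0)).sum)
  simp only [heval]
  have hjsum : ∀ P : Fin n → Equiv.Perm (Fin m),
      (∑ j : Fin (m + 1),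
        ((allocList P t (Finset.univ : Finset (Fin m))).map
          (fun z => if z.1 = i then
            ((m + 1 : ℕ) : ℝ) - (((j.succAbove (P i z.2)).val + 1 : ℕ) : ℝ) + 1
          else 0)).sum)
      = (((m : ℝ) + 1) + 1) * utilAgent (fun k => ((m : ℕ) : ℝ) - (k : ℝ) + 1) P t i := by
    intro P
    rw [list_sum_swap]
    have hterm : ∀ z : Fin n × Fin m,
        (∑ j : Fin (m + 1), if z.1 = i then
            ((m + 1 : ℕ) : ℝ) - (((j.succAbove (P i z.2)).val + 1 : ℕ) : ℝ) + 1
          else 0)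
        = (((m : ℝ) + 1) + 1) *
            (if z.1 = i then ((m : ℕ) : ℝ) - (((P i z.2).val + 1 : ℕ) : ℝ) + 1 else 0) := by
      intro z
      by_cases hz : z.1 = i
      · simp only [if_pos hz]
        exact key_sum (P i z.2)
      · simp [if_neg hz]
    simp only [hterm]
    rw [List.sum_map_mul_left]
    rfl
  simp only [hjsum]
  rw [← Finset.mul_sum, ← Finset.mul_sum]
  simp only [Finset.card_univ, Fintype.card_fin, nsmul_eq_mul, Fintype.card_fun]
  push_cast
  have hcJ : Fintype.card { k : Fin n // k ≠ a0 }
      = Fintype.card { j : { k : Fin n // k ≠ a0 } // j ≠ ⟨i, hi⟩ } + 1 := by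
    rw [card_ne (⟨i, hi⟩ : { k : Fin n // k ≠ a0 })]
    have hpos : 0 < Fintype.card { k : Fin n // k ≠ a0 } :=
      Fintype.card_pos_iff.mpr ⟨⟨i, hi⟩⟩
    omega
  have hcardR : (((m + 1).factorial : ℝ)) ^ n
      = ((m : ℝ) + 1) * (((m : ℝ) + 1)
          * ((m : ℝ) + 1) ^ Fintype.card { j : { k : Fin n // k ≠ a0 } // j ≠ ⟨i, hi⟩ })
        * ((m.factorial : ℝ)) ^ n := by
    have h := card_profile (m := m) (n := n) a0
    rw [hcJ, pow_succ] at h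
    have := congrArg (Nat.cast : ℕ → ℝ) h
    push_cast at this
    rw [this]
    ring
  rw [hcardR]
  have hm0 : ((m.factorial : ℝ)) ^ n ≠ 0 := by positivity
  have hm1 : ((m : ℝ) + 1) ≠ 0 := by positivity
  have hm2 : ((m : ℝ) + 1) ^ Fintype.card { j : { k : Fin n // k ≠ a0 } // j ≠ ⟨i, hi⟩ } ≠ 0 := by
    positivity
  field_simp

end Main

/-- For `n ≥ 2` agents, `p ≥ 2` items, Borda utilities and uniform
independent profiles, and any policy `π` of length `p` whose first entry is agent `1`
(here agent `⟨0, _⟩`): the expected utility of agent `1` satisfies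
`ū₁(π) = p + ū₁(π̃)`, and for every other agent `i`,
`ū_i(π) = ((p+1)/p) · ū_i(π̃)`, where `π̃ = π.tail` is used to allocate `p - 1` items. -/
theorem stmt0 (n p : ℕ) (hn : 2 ≤ n) (hp : 2 ≤ p)
    (π : List (Fin n)) (hlen : π.length = p)
    (hhead : π.head? = some ⟨0, by omega⟩) :
    SeqAlloc.expectedBordaUtil n p π ⟨0, by omega⟩
      = p + SeqAlloc.expectedBordaUtil n (p - 1) π.tail ⟨0, by omega⟩
    ∧ ∀ i : Fin n, i ≠ ⟨0, by omega⟩ →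
      SeqAlloc.expectedBordaUtil n p π i
        = ((p : ℝ) + 1) / p * SeqAlloc.expectedBordaUtil n (p - 1) π.tail i := by
  obtain ⟨m, rfl⟩ : ∃ m, p = m + 1 := ⟨p - 1, by omega⟩
  obtain ⟨a0, t, rfl⟩ : ∃ a0 t, π = a0 :: t := by
    cases π with
    | nil => simp at hhead
    | cons a t => exact ⟨a, t, rfl⟩
  obtain ⟨z, hz⟩ := a0
  have hz0 : z = 0 := by simpa using hhead
  subst hz0
  simp only [Nat.add_sub_cancel, List.tail_cons]
  constructor
  · push_cast
    exact part1 (⟨0, hz⟩ : Fin n) t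
  · intro i hi
    push_cast
    exact part2 (⟨0, hz⟩ : Fin n) t i hi
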